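/- Let u_T : ℝⁿ → ℝ be Lipschitz with I_T(u_T) nonempty. Then ũ0 := S_T^- u_T is the smallest element of I_T(u_T): S_T^+ ũ0 = u_T, and every u0 ∈ I_T(u_T) satisfies u0(x) ≥ ũ0(x) for all x ∈ ℝⁿ. -/

import Mathlib

open scoped RealInnerProductSpace
open Filter

noncomputable section

/-- `n`-dimensional Euclidean space. -/
abbrev Euc (n : ℕ) := EuclideanSpace ℝ (Fin n)

/-- A real-valued function on `ℝⁿ` is Lipschitz (with some constant). -/
def IsLip {n : ℕ} (f : Euc n → ℝ) : Prop := ∃ K : NNReal, LipschitzWith K f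

/-- The Legendre transform `L(q) = sup_p (⟨q,p⟫ - H(p))`. -/
def legendre {n : ℕ} (H : Euc n → ℝ) (q : Euc n) : ℝ :=
  ⨆ p : Euc n, (⟪q, p⟫ - H p)

/-- The forward Hopf–Lax operator `(S_T^+ g)(x) = inf_y [g(y) + T·L((x-y)/T)]`. -/
def Splus {n : ℕ} (T : ℝ) (L : Euc n → ℝ) (g : Euc n → ℝ) (x : Euc n) : ℝ :=
  ⨅ y : Euc n, (g y + T * L (T⁻¹ • (x - y)))

/-- The backward operator `(S_T^- g)(x) = sup_y [g(y) - T·L((y-x)/T)]`. -/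
def Sminus {n : ℕ} (T : ℝ) (L : Euc n → ℝ) (g : Euc n → ℝ) (x : Euc n) : ℝ :=
  ⨆ y : Euc n, (g y - T * L (T⁻¹ • (y - x)))

/-- The Hessian of `H` is positive definite at every point. -/
def PosDefHessian {n : ℕ} (H : Euc n → ℝ) : Prop :=
  ∀ p v : Euc n, v ≠ 0 → 0 < iteratedFDeriv ℝ 2 H p ![v, v]

/-- `H` is superlinear: `H(p)/‖p‖ → +∞` as `‖p‖ → +∞`. -/
def Superlinear {n : ℕ} (H : Euc n → ℝ) : Prop :=
  Tendsto (fun p : Euc n => H p / ‖p‖) (cocompact (Euc n)) atTop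

lemma legendre_bddAbove {n : ℕ} {H : Euc n → ℝ} (hHc : Continuous H)
    (hs : Superlinear H) (q : Euc n) :
    BddAbove (Set.range fun p : Euc n => ⟪q, p⟫ - H p) := by
  have hev : ∀ᶠ p in cocompact (Euc n), ‖q‖ + 1 ≤ H p / ‖p‖ := hs.eventually_ge_atTop _
  obtain ⟨t, htc, hts⟩ := Filter.mem_cocompact.mp hev
  have hcont : Continuous fun p : Euc n => ⟪q, p⟫ - H p :=
    (continuous_const.inner continuous_id).sub hHc
  obtain ⟨C, hC⟩ := (htc.image hcont).bddAbove
  refine ⟨max C 0, ?_⟩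
  rintro _ ⟨p, rfl⟩
  by_cases hp : p ∈ t
  · exact le_trans (hC (Set.mem_image_of_mem _ hp)) (le_max_left _ _)
  · have h1 : ‖q‖ + 1 ≤ H p / ‖p‖ := hts hp
    have hpne : p ≠ 0 := by
      rintro rfl
      simp only [norm_zero, div_zero] at h1
      linarith [norm_nonneg q]
    have hpn : 0 < ‖p‖ := norm_pos_iff.mpr hpne
    have h2 : (‖q‖ + 1) * ‖p‖ ≤ H p := (le_div_iff₀ hpn).mp h1
    have h3 : ⟪q, p⟫ ≤ ‖q‖ * ‖p‖ := real_inner_le_norm q p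
    have h4 : ⟪q, p⟫ - H p ≤ -‖p‖ := by nlinarith
    have h5 : -‖p‖ ≤ (0:ℝ) := by linarith
    exact le_trans h4 (le_trans h5 (le_max_right _ _))

lemma key_lower {n : ℕ} {T : ℝ} (hT : 0 < T) {H : Euc n → ℝ} (hHc : Continuous H)
    (hs : Superlinear H) {K M : ℝ} (hK : 0 ≤ K)
    (hM : ∀ p : Euc n, ‖p‖ ≤ K → H p ≤ M) (v : Euc n) :
    K * ‖v‖ - T * M ≤ T * legendre H (T⁻¹ • v) := by
  have hHM : H 0 ≤ M := hM 0 (by simp [hK])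
  by_cases hv : v = 0
  · have h0 : ⟪T⁻¹ • v, (0:Euc n)⟫ - H 0 ≤ legendre H (T⁻¹ • v) :=
      le_ciSup (legendre_bddAbove hHc hs (T⁻¹ • v)) (0 : Euc n)
    simp only [inner_zero_right, zero_sub] at h0
    have h1 : -M ≤ legendre H (T⁻¹ • v) := by linarith
    subst hv
    simp only [norm_zero, mul_zero, zero_sub]
    nlinarith
  · set p : Euc n := (K / ‖v‖) • v with hp
    have hvn : 0 < ‖v‖ := norm_pos_iff.mpr hv
    have hnp : ‖p‖ = K := by
      rw [hp, norm_smul, Real.norm_eq_abs, abs_of_nonneg (div_nonneg hK hvn.le),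
        div_mul_cancel₀ _ hvn.ne']
    have hip : ⟪T⁻¹ • v, p⟫ = T⁻¹ * (K * ‖v‖) := by
      rw [hp, real_inner_smul_left, real_inner_smul_right, real_inner_self_eq_norm_sq]
      field_simp
    have h1 : ⟪T⁻¹ • v, p⟫ - H p ≤ legendre H (T⁻¹ • v) :=
      le_ciSup (legendre_bddAbove hHc hs _) p
    have h2 : H p ≤ M := hM p (le_of_eq hnp)
    rw [hip] at h1
    have h3 : T * (T⁻¹ * (K * ‖v‖) - H p) ≤ T * legendre H (T⁻¹ • v) :=
      mul_le_mul_of_nonneg_left h1 hT.le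
    have h4 : T * (T⁻¹ * (K * ‖v‖) - H p) = K * ‖v‖ - T * H p := by
      field_simp
    rw [h4] at h3
    have h5 : T * H p ≤ T * M := mul_le_mul_of_nonneg_left h2 hT.le
    linarith

lemma sandwich {n : ℕ} {T : ℝ} (hT : 0 < T) {H : Euc n → ℝ} (hHc : Continuous H)
    (hs : Superlinear H) {g : Euc n → ℝ} {K : NNReal} (hg : LipschitzWith K g) :
    ∃ M : ℝ, ∀ x y : Euc n,
      g x - T * M ≤ g y + T * legendre H (T⁻¹ • (x - y)) := by
  obtain ⟨M, hM⟩ := ((isCompact_closedBall (0:Euc n) K).image hHc).bddAbove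
  have hM' : ∀ p : Euc n, ‖p‖ ≤ K → H p ≤ M := fun p hpK =>
    hM (Set.mem_image_of_mem _ (by simpa [Metric.mem_closedBall, dist_zero_right] using hpK))
  refine ⟨M, fun x y => ?_⟩
  have hlip : g x - g y ≤ (K:ℝ) * ‖x - y‖ := by
    have h := hg.dist_le_mul x y
    rw [Real.dist_eq, dist_eq_norm] at h
    calc g x - g y ≤ |g x - g y| := le_abs_self _
      _ ≤ (K:ℝ) * ‖x - y‖ := h
  have hkl := key_lower hT hHc hs (K.coe_nonneg) hM' (x - y)
  linarith


/-- If `I_T(u_T)` is nonempty, then `ũ0 := S_T^- u_T` is its smallest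
element: `S_T^+ ũ0 = u_T` and every `u0 ∈ I_T(u_T)` satisfies `u0 ≥ ũ0` pointwise. -/
theorem backward_solution_smallest_initial_datum
    {n : ℕ} (hn : 0 < n) (T : ℝ) (hT : 0 < T)
    (H : Euc n → ℝ) (hH : ContDiff ℝ 2 H)
    (hHconv : PosDefHessian H) (hHsuper : Superlinear H)
    (uT : Euc n → ℝ) (huT : IsLip uT)
    (hreach : ∃ u0 : Euc n → ℝ, IsLip u0 ∧ Splus T (legendre H) u0 = uT) :
    Splus T (legendre H) (Sminus T (legendre H) uT) = uT ∧
      ∀ u0 : Euc n → ℝ, IsLip u0 → Splus T (legendre H) u0 = uT →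
        ∀ x : Euc n, Sminus T (legendre H) uT x ≤ u0 x := by
  obtain ⟨u0, ⟨K0, hK0⟩, hu0⟩ := hreach
  have hHc : Continuous H := hH.continuous
  set L := legendre H with hLdef
  -- general minimality: any Lipschitz g with S⁺g = uT dominates S⁻uT
  have hmin : ∀ (g : Euc n → ℝ) (K : NNReal), LipschitzWith K g →
      Splus T L g = uT → ∀ x, Sminus T L uT x ≤ g x := by
    intro g K hg hgeq x
    obtain ⟨M, hM⟩ := sandwich hT hHc hHsuper hg
    refine ciSup_le fun y => ?_
    have hbdd : BddBelow (Set.range fun z => g z + T * L (T⁻¹ • (y - z))) :=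
      ⟨g y - T * M, by rintro _ ⟨z, rfl⟩; exact hM y z⟩
    have h1 : Splus T L g y ≤ g x + T * L (T⁻¹ • (y - x)) := ciInf_le hbdd x
    rw [hgeq] at h1
    linarith
  have hmin0 : ∀ x, Sminus T L uT x ≤ u0 x := hmin u0 K0 hK0 hu0
  obtain ⟨KT, hKT⟩ := huT
  obtain ⟨MT, hMT⟩ := sandwich hT hHc hHsuper hKT
  have hBA : ∀ y, BddAbove (Set.range fun z => uT z - T * L (T⁻¹ • (z - y))) := by
    intro y
    refine ⟨uT y + T * MT, ?_⟩
    rintro _ ⟨z, rfl⟩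
    have := hMT z y
    simp only [Set.mem_setOf_eq]
    linarith
  have hstepB : ∀ x y, uT x ≤ Sminus T L uT y + T * L (T⁻¹ • (x - y)) := by
    intro x y
    have h := le_ciSup (hBA y) x
    have h' : uT x - T * L (T⁻¹ • (x - y)) ≤ Sminus T L uT y := h
    linarith
  constructor
  · funext x
    apply le_antisymm
    · have hbddU : BddBelow (Set.range fun y => Sminus T L uT y + T * L (T⁻¹ • (x - y))) :=
        ⟨uT x, by rintro _ ⟨y, rfl⟩; exact hstepB x y⟩
      have h2 : ∀ y, Splus T L (Sminus T L uT) x ≤ u0 y + T * L (T⁻¹ • (x - y)) := by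
        intro y
        have hc : Splus T L (Sminus T L uT) x ≤ Sminus T L uT y + T * L (T⁻¹ • (x - y)) :=
          ciInf_le hbddU y
        have := hmin0 y
        linarith
      have h3 : Splus T L (Sminus T L uT) x ≤ Splus T L u0 x := le_ciInf h2
      rw [hu0] at h3
      exact h3
    · exact le_ciInf fun y => hstepB x y
  · intro u0' hLip' heq' x
    obtain ⟨K', hK'⟩ := hLip'
    exact hmin u0' K' hK' heq' x
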